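/- Confluence of swaps for window-equivalent sequences: Let v ∈ ℕ and let F and G be finite sequences of registers such that for all k ∈ ℕ, the subsequences of F and of G consisting of registers with rounds in [k−v, k] are equal. Then there exists a single swap-proof sequence H that can be obtained both by iteratively applying swaps to F and by iteratively applying swaps to G. -/

import Mathlib

variable {R : Type}

/-- Number of inversions of a sequence of registers: pairs of positions `i < j`
with `round F_i > round F_j + v`. -/
def inversions (round : R → ℕ) (v : ℕ) : List R → ℕ
  | [] => 0
  | x :: xs => xs.countP (fun y => decide (round y + v < round x)) + inversions round v xs

/-- `F'` is obtained from `F` by one swap: two adjacent registers more than `v`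
rounds apart are exchanged, the one with earliest round being put first. -/
def IsSwap (round : R → ℕ) (v : ℕ) (F F' : List R) : Prop :=
  ∃ p s : List R, ∃ x y : R,
    round y + v < round x ∧ F = p ++ x :: y :: s ∧ F' = p ++ y :: x :: s

/-- A sequence is swap-proof when no swap is applicable. -/
def SwapProof (round : R → ℕ) (v : ℕ) (F : List R) : Prop :=
  ¬ ∃ F' : List R, IsSwap round v F F'

/-- Projection of a sequence of registers onto the window of rounds `[k - v, k]`. -/
def windowProj (round : R → ℕ) (v k : ℕ) (F : List R) : List R :=
  F.filter (fun x => decide (k - v ≤ round x ∧ round x ≤ k))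

section Aux

variable (round : R → ℕ) (v : ℕ)

lemma countP_swap (f : R → Bool) (x y : R) (p s : List R) :
    List.countP f (p ++ x :: y :: s) = List.countP f (p ++ y :: x :: s) := by
  simp only [List.countP_append, List.countP_cons]
  omega

lemma inversions_swap {x y : R} (h : round y + v < round x) (p s : List R) :
    inversions round v (p ++ y :: x :: s) + 1 = inversions round v (p ++ x :: y :: s) := by
  induction p with
  | nil =>
    simp only [List.nil_append, inversions, List.countP_cons]
    have h1 : decide (round y + v < round x) = true := decide_eq_true h
    have h2 : decide (round x + v < round y) = false := decide_eq_false (by omega)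
    rw [h1, h2]
    simp
    omega
  | cons a p ih =>
    simp only [List.cons_append, inversions, List.append_eq]
    rw [countP_swap]
    omega

lemma inversions_lt {F F' : List R} (h : IsSwap round v F F') :
    inversions round v F' < inversions round v F := by
  obtain ⟨p, s, x, y, hxy, rfl, rfl⟩ := h
  have := inversions_swap round v hxy p s
  omega

lemma exists_swapProof (F : List R) :
    ∃ H, Relation.ReflTransGen (IsSwap round v) F H ∧ SwapProof round v H := by
  generalize hn : inversions round v F = n
  induction n using Nat.strong_induction_on generalizing F with
  | _ n ih =>
    by_cases h : SwapProof round v F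
    · exact ⟨F, .refl, h⟩
    · obtain ⟨F', hF'⟩ := not_not.mp h
      obtain ⟨H, h1, h2⟩ := ih (inversions round v F') (hn ▸ inversions_lt round v hF') F' rfl
      exact ⟨H, .head hF' h1, h2⟩

lemma windowProj_nil (k : ℕ) : windowProj round v k [] = [] := rfl

lemma windowProj_append (k : ℕ) (l₁ l₂ : List R) :
    windowProj round v k (l₁ ++ l₂) = windowProj round v k l₁ ++ windowProj round v k l₂ :=
  List.filter_append _ _

lemma windowProj_cons_pos {k : ℕ} {x : R} (l : List R)
    (h : k - v ≤ round x ∧ round x ≤ k) :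
    windowProj round v k (x :: l) = x :: windowProj round v k l := by
  unfold windowProj
  rw [List.filter_cons, if_pos (by simpa using h)]

lemma windowProj_cons_neg {k : ℕ} {x : R} (l : List R)
    (h : ¬ (k - v ≤ round x ∧ round x ≤ k)) :
    windowProj round v k (x :: l) = windowProj round v k l := by
  unfold windowProj
  rw [List.filter_cons, if_neg (by simpa using h)]

lemma windowProj_eq_nil {k : ℕ} {l : List R}
    (h : ∀ a ∈ l, ¬ (k - v ≤ round a ∧ round a ≤ k)) :
    windowProj round v k l = [] := by
  unfold windowProj
  rw [List.filter_eq_nil_iff]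
  intro a ha
  simpa using h a ha

lemma mem_of_mem_windowProj {k : ℕ} {l : List R} {a : R}
    (h : a ∈ windowProj round v k l) : a ∈ l :=
  List.mem_of_mem_filter h

lemma windowProj_swap {F F' : List R} (h : IsSwap round v F F') (k : ℕ) :
    windowProj round v k F = windowProj round v k F' := by
  obtain ⟨p, s, x, y, hxy, rfl, rfl⟩ := h
  rw [windowProj_append, windowProj_append]
  congr 1
  by_cases hx : k - v ≤ round x ∧ round x ≤ k <;>
    by_cases hy : k - v ≤ round y ∧ round y ≤ k
  · exfalso; omega
  · rw [windowProj_cons_pos round v (y :: s) hx, windowProj_cons_neg round v s hy,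
      windowProj_cons_neg round v (x :: s) hy, windowProj_cons_pos round v s hx]
  · rw [windowProj_cons_neg round v (y :: s) hx, windowProj_cons_pos round v s hy,
      windowProj_cons_pos round v (x :: s) hy, windowProj_cons_neg round v s hx]
  · rw [windowProj_cons_neg round v (y :: s) hx, windowProj_cons_neg round v s hy,
      windowProj_cons_neg round v (x :: s) hy, windowProj_cons_neg round v s hx]

lemma windowProj_rtg {F F' : List R}
    (h : Relation.ReflTransGen (IsSwap round v) F F') (k : ℕ) :
    windowProj round v k F = windowProj round v k F' := by
  induction h with
  | refl => rfl
  | tail _ hstep ih => exact ih.trans (windowProj_swap round v hstep _)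

lemma swapProof_tail {x : R} {F' : List R} (h : SwapProof round v (x :: F')) :
    SwapProof round v F' := by
  rintro ⟨H, p, s, a, b, hab, rfl, rfl⟩
  exact h ⟨x :: (p ++ b :: a :: s), x :: p, s, a, b, hab, by simp, by simp⟩

/-- Key head lemma: if `G` is swap-proof with head `y`, has the same window
projections as `x :: F'`, and `round x ≤ round y`, then `y = x`. -/
lemma head_eq {x y : R} {F' G' : List R}
    (hG : SwapProof round v (y :: G'))
    (hproj : ∀ k, windowProj round v k (x :: F') = windowProj round v k (y :: G'))
    (hxy : round x ≤ round y) : y = x := by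
  set q : R → Bool := fun g => decide (round x < round g) with hq
  have hsplit : (y :: G').takeWhile q ++ (y :: G').dropWhile q = y :: G' :=
    List.takeWhile_append_dropWhile
  set p : List R := (y :: G').takeWhile q with hp
  set r : List R := (y :: G').dropWhile q with hr
  -- x is a member of y :: G'
  have hxG : x ∈ y :: G' := by
    have hcx : round x - v ≤ round x ∧ round x ≤ round x := by omega
    have h1 : x ∈ windowProj round v (round x) (x :: F') := by
      rw [windowProj_cons_pos round v F' hcx]
      exact List.mem_cons_self
    rw [hproj (round x)] at h1
    exact mem_of_mem_windowProj round v h1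
  have hrne : r ≠ [] := by
    intro hnil
    rw [hnil, List.append_nil] at hsplit
    have := List.mem_takeWhile_imp (hsplit ▸ hxG : x ∈ p)
    rw [hq] at this
    simp at this
  obtain ⟨z, s, hzs⟩ := List.exists_cons_of_ne_nil hrne
  have hd : List.dropWhile q (y :: G') = z :: s := by rw [← hr, hzs]
  have hz : ¬ round x < round z := by
    have h0 := List.head_dropWhile_not q (l := y :: G') hrne
    simp only [hd, List.head_cons, hq] at h0
    have e : ∀ (l : List R) (h : l ≠ []), l = z :: s → l.head h = z := by rintro l h rfl; rfl
    have hd' : List.dropWhile (fun g => decide (round x < round g)) (y :: G') = z :: s := hd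
    rw [e _ _ hd'] at h0
    simpa using h0
  have hpgt : ∀ a ∈ p, round x < round a := by
    intro a ha
    have := List.mem_takeWhile_imp ha
    rw [hq] at this
    simpa using this
  rcases List.eq_nil_or_concat p with hpnil | ⟨p₀, w, hpw⟩
  · -- p = [] : z = y, round y ≤ round x so round y = round x, y in window round x
    rw [hpnil, List.nil_append, hzs] at hsplit
    have hyz : y = z := by
      injection hsplit.symm with h1 h2
    have hcx : round x - v ≤ round x ∧ round x ≤ round x := by omega
    have hcy : round x - v ≤ round y ∧ round y ≤ round x := by
      rw [hyz] at hxy ⊢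
      omega
    have h2 := hproj (round x)
    rw [windowProj_cons_pos round v F' hcx, windowProj_cons_pos round v G' hcy] at h2
    injection h2 with h1 h2
    exact h1.symm
  · -- p = p₀ ++ [w]
    exfalso
    rw [List.concat_eq_append] at hpw
    have hwmem : w ∈ p := by rw [hpw]; simp
    have hw : round x < round w := hpgt w hwmem
    have hGeq : y :: G' = p₀ ++ w :: z :: s := by
      rw [← hsplit, hpw, hzs]
      simp
    -- swap-proofness : ¬ round z + v < round w
    have hwz : round w ≤ round z + v := by
      by_contra hc
      push_neg at hc
      exact hG ⟨p₀ ++ z :: w :: s, p₀, s, w, z, hc, hGeq, rfl⟩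
    -- projection at round x : first windowed element is z, hence z = x
    have hcx : round x - v ≤ round x ∧ round x ≤ round x := by omega
    have hcw : ¬ (round x - v ≤ round w ∧ round w ≤ round x) := by omega
    have hcz : round x - v ≤ round z ∧ round z ≤ round x := by omega
    have hp0 : windowProj round v (round x) p₀ = [] := by
      apply windowProj_eq_nil
      intro a ha
      have := hpgt a (by rw [hpw]; simp [ha])
      omega
    have hzx : z = x := by
      have h1 := hproj (round x)
      rw [hGeq, windowProj_append, windowProj_cons_neg round v (z :: s) hcw,
        windowProj_cons_pos round v s hcz, hp0, List.nil_append,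
        windowProj_cons_pos round v F' hcx] at h1
      injection h1 with h1a h1b
      exact h1a.symm
    have hzr : round z = round x := by rw [hzx]
    -- projection at round x + v : first windowed element lies in p, contradiction
    have hcx' : round x + v - v ≤ round x ∧ round x ≤ round x + v := by omega
    have hcw' : round x + v - v ≤ round w ∧ round w ≤ round x + v := by omega
    have hk := hproj (round x + v)
    rw [hGeq, windowProj_append, windowProj_cons_pos round v F' hcx',
      windowProj_cons_pos round v (z :: s) hcw'] at hk
    obtain ⟨u, t, hu⟩ := List.exists_cons_of_ne_nil
      (l := windowProj round v (round x + v) p₀ ++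
        w :: windowProj round v (round x + v) (z :: s))
      (by intro hc; simp at hc)
    rw [hu] at hk
    injection hk with hk1 hk2
    -- u = x, but u ∈ p so round x < round u
    have hup : u ∈ p := by
      rcases hfp : windowProj round v (round x + v) p₀ with _ | ⟨u', t'⟩
      · rw [hfp, List.nil_append] at hu
        injection hu with hu1 hu2
        rw [← hu1]
        exact hwmem
      · rw [hfp] at hu
        injection hu with hu1 hu2
        have hmem : u' ∈ p₀ :=
          mem_of_mem_windowProj round v (by rw [hfp]; exact List.mem_cons_self)
        rw [← hu1, hpw]
        exact List.mem_append_left _ hmem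
    have := hpgt u hup
    rw [← hk1] at this
    omega

/-- Two swap-proof sequences with equal window projections are equal. -/
lemma swapProof_unique (F G : List R) (hF : SwapProof round v F) (hG : SwapProof round v G)
    (hproj : ∀ k, windowProj round v k F = windowProj round v k G) : F = G := by
  induction F generalizing G with
  | nil =>
    cases G with
    | nil => rfl
    | cons g G' =>
      have := hproj (round g)
      have hc : round g - v ≤ round g ∧ round g ≤ round g := by omega
      rw [windowProj_nil, windowProj_cons_pos round v G' hc] at this
      exact absurd this (by simp)
  | cons x F' ih =>
    cases G with
    | nil =>
      have := hproj (round x)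
      have hc : round x - v ≤ round x ∧ round x ≤ round x := by omega
      rw [windowProj_cons_pos round v F' hc, windowProj_nil] at this
      exact absurd this (by simp)
    | cons y G' =>
      have hyx : y = x := by
        rcases le_total (round x) (round y) with h | h
        · exact head_eq round v hG hproj h
        · exact (head_eq round v hF (fun k => (hproj k).symm) h).symm
      subst hyx
      have htails : ∀ k, windowProj round v k F' = windowProj round v k G' := by
        intro k
        have := hproj k
        by_cases hy : k - v ≤ round y ∧ round y ≤ k
        · rw [windowProj_cons_pos round v F' hy, windowProj_cons_pos round v G' hy] at this
          injection this
        · rwa [windowProj_cons_neg round v F' hy, windowProj_cons_neg round v G' hy] at this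
      exact congrArg (y :: ·) (ih G' (swapProof_tail round v hF)
        (swapProof_tail round v hG) htails)

end Aux

/-- Confluence of swaps for window-equivalent sequences (Lemma A.4). -/
theorem swaps_confluence (round : R → ℕ) (v : ℕ) (F G : List R)
    (hwin : ∀ k : ℕ, windowProj round v k F = windowProj round v k G) :
    ∃ H : List R,
      Relation.ReflTransGen (IsSwap round v) F H ∧
      Relation.ReflTransGen (IsSwap round v) G H ∧
      SwapProof round v H := by
  obtain ⟨HF, hFr, hFp⟩ := exists_swapProof round v F
  obtain ⟨HG, hGr, hGp⟩ := exists_swapProof round v G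
  have hproj : ∀ k, windowProj round v k HF = windowProj round v k HG := by
    intro k
    rw [← windowProj_rtg round v hFr k, ← windowProj_rtg round v hGr k, hwin k]
  have hEq : HF = HG := swapProof_unique round v HF HG hFp hGp hproj
  exact ⟨HF, hFr, hEq ▸ hGr, hFp⟩
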